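/- Let N ≥ 1, let P1, P3 be N×N complex matrices with P1 ≠ P3 satisfying (P3−P1)† · (P3−P1) = (‖P3−P1‖_F² / N) · I_N, and let P2, P4 be arbitrary N×N complex matrices. Then the 2N×(3N−1) matrix G(P1,P2,P3,P4) has rank 2N (full row rank) if and only if w · [P1·P2 + N·(I_N − P1) · ((P3−P1)† / ‖P3−P1‖_F²) · (P3·P4 − P1·P2)] ≠ w, where w is the 1×N all-ones row vector. -/

import Mathlib

open Matrix

noncomputable section

/-- Squared Frobenius norm of a complex matrix. -/
def frobSq {m n : ℕ} (X : Matrix (Fin m) (Fin n) ℂ) : ℝ :=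
  ∑ i, ∑ j, Complex.normSq (X i j)

/-- The 3N × (3N-1) bidiagonal matrix `Ā` of the paper (0-indexed):
`-1` on the diagonal, `1` on the subdiagonal, zeros elsewhere. -/
def Abar (N : ℕ) : Matrix (Fin (3 * N)) (Fin (3 * N - 1)) ℂ :=
  Matrix.of fun i j =>
    if i.val = j.val then -1 else if i.val = j.val + 1 then 1 else 0

/-- 2N × 3N block matrix `[[A, B, C], [D, E, F]]` built out of N × N blocks. -/
def blk23 {N : ℕ} (A B C D E F : Matrix (Fin N) (Fin N) ℂ) :
    Matrix (Fin (2 * N)) (Fin (3 * N)) ℂ :=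
  Matrix.of fun i j =>
    if hi : i.val < N then
      if hj : j.val < N then A ⟨i.val, hi⟩ ⟨j.val, hj⟩
      else if hj2 : j.val < 2 * N then B ⟨i.val, hi⟩ ⟨j.val - N, by omega⟩
      else C ⟨i.val, hi⟩ ⟨j.val - 2 * N, by have := j.isLt; omega⟩
    else
      if hj : j.val < N then D ⟨i.val - N, by have := i.isLt; omega⟩ ⟨j.val, hj⟩
      else if hj2 : j.val < 2 * N then
        E ⟨i.val - N, by have := i.isLt; omega⟩ ⟨j.val - N, by omega⟩
      else F ⟨i.val - N, by have := i.isLt; omega⟩ ⟨j.val - 2 * N, by have := j.isLt; omega⟩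

/-- 2N × 2N block matrix `[[A, B], [C, D]]` built out of N × N blocks. -/
def blk22 {N : ℕ} (A B C D : Matrix (Fin N) (Fin N) ℂ) :
    Matrix (Fin (2 * N)) (Fin (2 * N)) ℂ :=
  Matrix.of fun i j =>
    if hi : i.val < N then
      if hj : j.val < N then A ⟨i.val, hi⟩ ⟨j.val, hj⟩
      else B ⟨i.val, hi⟩ ⟨j.val - N, by have := j.isLt; omega⟩
    else
      if hj : j.val < N then C ⟨i.val - N, by have := i.isLt; omega⟩ ⟨j.val, hj⟩
      else D ⟨i.val - N, by have := i.isLt; omega⟩ ⟨j.val - N, by have := j.isLt; omega⟩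

/-- The 2N × (3N-1) matrix `G(P1, P2, P3, P4) = [[I, P1, P1·P2], [I, P3, P3·P4]] · Ā`. -/
def Gmat {N : ℕ} (P1 P2 P3 P4 : Matrix (Fin N) (Fin N) ℂ) :
    Matrix (Fin (2 * N)) (Fin (3 * N - 1)) ℂ :=
  blk23 1 P1 (P1 * P2) 1 P3 (P3 * P4) * Abar N

/-- The 1 × N all-ones row vector `w`. -/
def wrow (N : ℕ) : Matrix (Fin 1) (Fin N) ℂ :=
  Matrix.of fun _ _ => 1

section aux
variable {N : ℕ}

private def rowm {N : ℕ} (v : Fin N → ℂ) : Matrix (Fin 1) (Fin N) ℂ :=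
  Matrix.of fun _ j => v j

private lemma rowm_vecMul (v : Fin N → ℂ) (A : Matrix (Fin N) (Fin N) ℂ) :
    rowm (v ᵥ* A) = rowm v * A := by
  ext i j
  simp [rowm, Matrix.vecMul, Matrix.mul_apply, dotProduct]

private def jn (a b : Fin N → ℂ) : Fin (2*N) → ℂ := fun i =>
  if h : i.val < N then a ⟨i.val, h⟩ else b ⟨i.val - N, by have := i.isLt; omega⟩

private lemma sum_two_mul (f : Fin (2*N) → ℂ) :
    ∑ i, f i = (∑ i : Fin N, f ⟨i.val, by have := i.isLt; omega⟩)
      + ∑ i : Fin N, f ⟨N + i.val, by have := i.isLt; omega⟩ := by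
  have h1 : ∑ i : Fin (2*N), f i
      = ∑ i : Fin (N+N), f ⟨i.val, by have := i.isLt; omega⟩ :=
    Fintype.sum_equiv (finCongr (two_mul N)) _ _ (fun i => rfl)
  rw [h1, Fin.sum_univ_add]
  rfl

private lemma vecMul_blk23_a (A B C D E F : Matrix (Fin N) (Fin N) ℂ) (a b : Fin N → ℂ)
    (j : Fin N) :
    (jn a b ᵥ* blk23 A B C D E F) ⟨j.val, by have := j.isLt; omega⟩
      = (a ᵥ* A) j + (b ᵥ* D) j := by
  simp only [Matrix.vecMul, dotProduct]
  rw [sum_two_mul]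
  congr 1
  · refine Finset.sum_congr rfl fun i _ => ?_
    have hi : i.val < N := i.isLt
    simp only [jn, blk23, Matrix.of_apply]
    rw [dif_pos hi, dif_pos hi, dif_pos j.isLt]
  · refine Finset.sum_congr rfl fun i _ => ?_
    have hi : ¬ (N + i.val < N) := by omega
    simp only [jn, blk23, Matrix.of_apply]
    rw [dif_neg hi, dif_neg hi, dif_pos j.isLt]
    simp only [Nat.add_sub_cancel_left, Fin.eta]

private lemma vecMul_blk23_b (A B C D E F : Matrix (Fin N) (Fin N) ℂ) (a b : Fin N → ℂ)
    (j : Fin N) :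
    (jn a b ᵥ* blk23 A B C D E F) ⟨N + j.val, by have := j.isLt; omega⟩
      = (a ᵥ* B) j + (b ᵥ* E) j := by
  simp only [Matrix.vecMul, dotProduct]
  rw [sum_two_mul]
  have hj1 : ¬ (N + j.val < N) := by omega
  have hj2 : N + j.val < 2 * N := by have := j.isLt; omega
  congr 1
  · refine Finset.sum_congr rfl fun i _ => ?_
    have hi : i.val < N := i.isLt
    simp only [jn, blk23, Matrix.of_apply]
    rw [dif_pos hi, dif_pos hi, dif_neg hj1, dif_pos hj2]
    simp only [Nat.add_sub_cancel_left, Fin.eta]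
  · refine Finset.sum_congr rfl fun i _ => ?_
    have hi : ¬ (N + i.val < N) := by omega
    simp only [jn, blk23, Matrix.of_apply]
    rw [dif_neg hi, dif_neg hi, dif_neg hj1, dif_pos hj2]
    simp only [Nat.add_sub_cancel_left, Fin.eta]

private lemma vecMul_blk23_c (A B C D E F : Matrix (Fin N) (Fin N) ℂ) (a b : Fin N → ℂ)
    (j : Fin N) :
    (jn a b ᵥ* blk23 A B C D E F) ⟨2 * N + j.val, by have := j.isLt; omega⟩
      = (a ᵥ* C) j + (b ᵥ* F) j := by
  simp only [Matrix.vecMul, dotProduct]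
  rw [sum_two_mul]
  have hj1 : ¬ (2 * N + j.val < N) := by omega
  have hj2 : ¬ (2 * N + j.val < 2 * N) := by omega
  congr 1
  · refine Finset.sum_congr rfl fun i _ => ?_
    have hi : i.val < N := i.isLt
    simp only [jn, blk23, Matrix.of_apply]
    rw [dif_pos hi, dif_pos hi, dif_neg hj1, dif_neg hj2]
    simp only [Nat.add_sub_cancel_left, Fin.eta]
  · refine Finset.sum_congr rfl fun i _ => ?_
    have hi : ¬ (N + i.val < N) := by omega
    simp only [jn, blk23, Matrix.of_apply]
    rw [dif_neg hi, dif_neg hi, dif_neg hj1, dif_neg hj2]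
    simp only [Nat.add_sub_cancel_left, Fin.eta]

private lemma ones_vecMul_Abar :
    (fun _ : Fin (3*N) => (1:ℂ)) ᵥ* Abar N = 0 := by
  funext j
  have hj := j.isLt
  simp only [Matrix.vecMul, dotProduct, Abar, Matrix.of_apply, one_mul, Pi.zero_apply]
  have h1 : ∀ i : Fin (3*N),
      (if i.val = j.val then (-1:ℂ) else if i.val = j.val + 1 then 1 else 0)
        = (if i = ⟨j.val, by omega⟩ then (-1:ℂ) else 0)
          + (if i = ⟨j.val + 1, by omega⟩ then 1 else 0) := by
    intro i
    by_cases h1 : i.val = j.val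
    · have e : i = (⟨j.val, by omega⟩ : Fin (3*N)) := Fin.ext h1
      rw [if_pos h1, e, if_pos rfl, if_neg (by simp [Fin.ext_iff])]
      ring
    · by_cases h2 : i.val = j.val + 1
      · have e : i = (⟨j.val+1, by omega⟩ : Fin (3*N)) := Fin.ext h2
        rw [if_neg h1, if_pos h2, e, if_neg (by simp [Fin.ext_iff] <;> omega), if_pos rfl]
        ring
      · rw [if_neg h1, if_neg h2, if_neg (fun e => h1 (congrArg Fin.val e)),
          if_neg (fun e => h2 (congrArg Fin.val e))]
        ring
  rw [Finset.sum_congr rfl (fun i _ => h1 i), Finset.sum_add_distrib,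
    Finset.sum_ite_eq' Finset.univ, Finset.sum_ite_eq' Finset.univ]
  simp

private lemma vecMul_Abar_eq_zero {y : Fin (3*N) → ℂ} (hN : 1 ≤ N)
    (h : y ᵥ* Abar N = 0) : ∃ t, y = fun _ => t := by
  have step : ∀ j : Fin (3*N - 1),
      y ⟨j.val + 1, by have := j.isLt; omega⟩ = y ⟨j.val, by have := j.isLt; omega⟩ := by
    intro j
    have hj := j.isLt
    have hje := congrFun h j
    simp only [Matrix.vecMul, dotProduct, Abar, Matrix.of_apply, Pi.zero_apply] at hje
    have h1 : ∀ i : Fin (3*N),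
        (y i * if i.val = j.val then (-1:ℂ) else if i.val = j.val + 1 then 1 else 0)
          = (if i = ⟨j.val, by omega⟩ then -(y ⟨j.val, by omega⟩) else 0)
            + (if i = ⟨j.val + 1, by omega⟩ then y ⟨j.val + 1, by omega⟩ else 0) := by
      intro i
      by_cases h1 : i.val = j.val
      · have e : i = (⟨j.val, by omega⟩ : Fin (3*N)) := Fin.ext h1
        rw [if_pos h1, e, if_pos rfl, if_neg (by simp [Fin.ext_iff])]
        ring
      · by_cases h2 : i.val = j.val + 1
        · have e : i = (⟨j.val+1, by omega⟩ : Fin (3*N)) := Fin.ext h2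
          rw [if_neg h1, if_pos h2, e, if_neg (by simp [Fin.ext_iff] <;> omega), if_pos rfl]
          ring
        · rw [if_neg h1, if_neg h2, if_neg (fun e => h1 (congrArg Fin.val e)),
            if_neg (fun e => h2 (congrArg Fin.val e))]
          ring
    rw [Finset.sum_congr rfl (fun i _ => h1 i), Finset.sum_add_distrib,
      Finset.sum_ite_eq' Finset.univ, Finset.sum_ite_eq' Finset.univ] at hje
    simp at hje
    linear_combination hje
  refine ⟨y ⟨0, by omega⟩, funext fun k => ?_⟩
  suffices H : ∀ m (hm : m < 3*N), y ⟨m, hm⟩ = y ⟨0, by omega⟩ by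
    simpa [Fin.eta] using H k.val k.isLt
  intro m
  induction m with
  | zero => intro hm; rfl
  | succ m ih =>
    intro hm
    have hm' : m < 3*N - 1 := by omega
    exact (step ⟨m, hm'⟩).trans (ih (by omega))

private lemma rank_full_iff {m n : ℕ} (A : Matrix (Fin m) (Fin n) ℂ) :
    A.rank = m ↔ ∀ x : Fin m → ℂ, x ᵥ* A = 0 → x = 0 := by
  rw [← Matrix.rank_transpose, Matrix.rank]
  have hrn := LinearMap.finrank_range_add_finrank_ker (Aᵀ.mulVecLin)
  rw [Module.finrank_fin_fun] at hrn
  constructor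
  · intro h x hx
    have hk : LinearMap.ker Aᵀ.mulVecLin = ⊥ := by
      apply Submodule.finrank_eq_zero.mp
      omega
    have : Aᵀ.mulVecLin x = 0 := by
      rw [Matrix.mulVecLin_apply, Matrix.mulVec_transpose]; exact hx
    simpa using (LinearMap.ker_eq_bot'.mp hk) x this
  · intro h
    have hk : LinearMap.ker Aᵀ.mulVecLin = ⊥ := by
      apply LinearMap.ker_eq_bot'.mpr
      intro x hx
      exact h x (by rw [← Matrix.mulVec_transpose, ← Matrix.mulVecLin_apply, hx])
    rw [hk, finrank_bot] at hrn
    omega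

private lemma key (hN : 1 ≤ N) (P1 P2 P3 P4 Sinv : Matrix (Fin N) (Fin N) ℂ)
    (hS1 : (P3 - P1) * Sinv = 1) (hS2 : Sinv * (P3 - P1) = 1) :
    (∃ x : Fin (2*N) → ℂ, x ≠ 0 ∧ x ᵥ* Gmat P1 P2 P3 P4 = 0) ↔
      wrow N * (P1 * P2 + (1 - P1) * Sinv * (P3 * P4 - P1 * P2)) = wrow N := by
  constructor
  · rintro ⟨x, hx, hxG⟩
    rw [Gmat, ← Matrix.vecMul_vecMul] at hxG
    obtain ⟨t, ht⟩ := vecMul_Abar_eq_zero hN hxG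
    set a : Fin N → ℂ := fun i => x ⟨i.val, by have := i.isLt; omega⟩ with ha
    set b : Fin N → ℂ := fun i => x ⟨N + i.val, by have := i.isLt; omega⟩ with hb
    have hxj : x = jn a b := by
      funext i
      simp only [jn]
      split
      · rfl
      · next hni =>
        simp only [hb]
        congr 1
        exact Fin.ext (by simp; omega)
    rw [hxj] at ht
    have hm1 : rowm a + rowm b = t • wrow N := by
      ext i j
      have h := vecMul_blk23_a 1 P1 (P1*P2) 1 P3 (P3*P4) a b j
      rw [ht, Matrix.vecMul_one, Matrix.vecMul_one] at h
      simp only [Matrix.add_apply, Matrix.smul_apply, rowm, wrow, Matrix.of_apply,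
        smul_eq_mul, mul_one]
      exact h.symm
    have hm2 : rowm a * P1 + rowm b * P3 = t • wrow N := by
      ext i j
      have h := vecMul_blk23_b 1 P1 (P1*P2) 1 P3 (P3*P4) a b j
      rw [ht] at h
      simp only [Matrix.add_apply, Matrix.smul_apply, ← rowm_vecMul, rowm, wrow,
        Matrix.of_apply, smul_eq_mul, mul_one]
      exact h.symm
    have hm3 : rowm a * (P1*P2) + rowm b * (P3*P4) = t • wrow N := by
      ext i j
      have h := vecMul_blk23_c 1 P1 (P1*P2) 1 P3 (P3*P4) a b j
      rw [ht] at h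
      simp only [Matrix.add_apply, Matrix.smul_apply, ← rowm_vecMul, rowm, wrow,
        Matrix.of_apply, smul_eq_mul, mul_one]
      exact h.symm
    have hA : rowm a = t • wrow N - rowm b := eq_sub_of_add_eq hm1
    have hBS : rowm b * (P3 - P1) = t • (wrow N * (1 - P1)) := by
      have h2 := hm2
      rw [hA, Matrix.sub_mul, Matrix.smul_mul] at h2
      rw [Matrix.mul_sub, Matrix.mul_sub, Matrix.mul_one, smul_sub]
      rw [← h2]
      abel
    have hBval : rowm b = t • (wrow N * (1 - P1) * Sinv) := by
      have h5 := congrArg (fun X => X * Sinv) hBS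
      rw [Matrix.mul_assoc, hS1, Matrix.mul_one, Matrix.smul_mul] at h5
      rw [h5]
    by_cases htz : t = 0
    · exfalso
      apply hx
      rw [htz, zero_smul] at hBval
      rw [htz, zero_smul, zero_sub, hBval, neg_zero] at hA
      have ha0 : a = 0 := funext fun j => congrFun (congrFun hA 0) j
      have hb0 : b = 0 := funext fun j => congrFun (congrFun hBval 0) j
      rw [hxj, ha0, hb0]
      funext i
      simp only [jn]
      split <;> rfl
    · have h3 := hm3
      rw [hA, hBval] at h3
      refine smul_right_injective _ htz ?_
      simp only [Matrix.mul_add, Matrix.mul_sub, Matrix.add_mul, Matrix.sub_mul,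
        Matrix.smul_mul, smul_add, smul_sub, Matrix.mul_assoc, Matrix.mul_one,
        Matrix.one_mul] at h3 ⊢
      rw [← h3]
      module
  · intro hw
    set Bm := wrow N * ((1 - P1) * Sinv) with hBm
    set b : Fin N → ℂ := fun j => Bm 0 j with hb
    set a : Fin N → ℂ := fun j => 1 - b j with ha
    have hra : rowm a = wrow N - Bm := by
      ext i j
      have hi : i = 0 := Subsingleton.elim _ _
      subst hi
      simp [rowm, wrow, ha, Matrix.sub_apply]
      rfl
    have hrb : rowm b = Bm := by
      ext i j
      have hi : i = 0 := Subsingleton.elim _ _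
      subst hi
      simp [rowm, hb]
    have hB3 : Bm * (P3 - P1) = wrow N * (1 - P1) := by
      calc Bm * (P3 - P1) = wrow N * ((1 - P1) * (Sinv * (P3 - P1))) := by
            rw [hBm]; simp only [Matrix.mul_assoc]
        _ = wrow N * (1 - P1) := by rw [hS2, Matrix.mul_one]
    have e2 : rowm a * P1 + rowm b * P3 = wrow N := by
      rw [hra, hrb, Matrix.sub_mul]
      have hB3' := hB3
      rw [Matrix.mul_sub, Matrix.mul_sub, Matrix.mul_one] at hB3'
      calc wrow N * P1 - Bm * P1 + Bm * P3
          = wrow N * P1 + (Bm * P3 - Bm * P1) := by abel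
        _ = wrow N * P1 + (wrow N - wrow N * P1) := by rw [hB3']
        _ = wrow N := by abel
    have e3 : rowm a * (P1*P2) + rowm b * (P3*P4) = wrow N := by
      rw [hra, hrb, Matrix.sub_mul]
      have hB4 : Bm * (P3*P4 - P1*P2) = wrow N * ((1 - P1) * Sinv * (P3*P4 - P1*P2)) := by
        rw [hBm]; simp only [Matrix.mul_assoc]
      have hw' := hw
      rw [Matrix.mul_add, ← hB4, Matrix.mul_sub] at hw'
      calc wrow N * (P1*P2) - Bm * (P1*P2) + Bm * (P3*P4)
          = wrow N * (P1*P2) + (Bm * (P3*P4) - Bm * (P1*P2)) := by abel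
        _ = wrow N := hw'
    refine ⟨jn a b, ?_, ?_⟩
    · intro h0
      have hb0 : b ⟨0, hN⟩ = 0 := by
        have h := congrFun h0 (⟨N, by omega⟩ : Fin (2*N))
        simp only [jn, Pi.zero_apply] at h
        rw [dif_neg (by omega : ¬ (N < N))] at h
        simp only [Nat.sub_self] at h
        exact h
      have ha0 : a ⟨0, hN⟩ = 0 := by
        have h := congrFun h0 (⟨0, by omega⟩ : Fin (2*N))
        simp only [jn, Pi.zero_apply] at h
        rw [dif_pos (show (0:ℕ) < N from hN)] at h
        exact h
      have he : a ⟨0, hN⟩ = 1 - b ⟨0, hN⟩ := rfl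
      rw [he, hb0] at ha0
      simp at ha0
    · rw [Gmat, ← Matrix.vecMul_vecMul]
      have hones : jn a b ᵥ* blk23 1 P1 (P1*P2) 1 P3 (P3*P4) = fun _ => (1:ℂ) := by
        funext j
        have hj3 := j.isLt
        by_cases h1 : j.val < N
        · have e : (jn a b ᵥ* blk23 1 P1 (P1*P2) 1 P3 (P3*P4)) j
              = (a ᵥ* (1 : Matrix (Fin N) (Fin N) ℂ)) ⟨j.val, h1⟩
                + (b ᵥ* (1 : Matrix (Fin N) (Fin N) ℂ)) ⟨j.val, h1⟩ :=
            vecMul_blk23_a 1 P1 (P1*P2) 1 P3 (P3*P4) a b ⟨j.val, h1⟩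
          rw [e, Matrix.vecMul_one, Matrix.vecMul_one]
          simp [ha]
        · by_cases h2 : j.val < 2 * N
          · have hj' : j.val - N < N := by omega
            have ej : j = ⟨N + (⟨j.val - N, hj'⟩ : Fin N).val, by omega⟩ := Fin.ext (by simp; omega)
            rw [ej, vecMul_blk23_b 1 P1 (P1*P2) 1 P3 (P3*P4) a b ⟨j.val - N, hj'⟩]
            have h := congrFun (congrFun e2 0) ⟨j.val - N, hj'⟩
            simp only [Matrix.add_apply, ← rowm_vecMul, rowm, wrow, Matrix.of_apply] at h
            exact h
          · have hj' : j.val - 2 * N < N := by omega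
            have ej : j = ⟨2 * N + (⟨j.val - 2 * N, hj'⟩ : Fin N).val, by omega⟩ :=
              Fin.ext (by simp; omega)
            rw [ej, vecMul_blk23_c 1 P1 (P1*P2) 1 P3 (P3*P4) a b ⟨j.val - 2 * N, hj'⟩]
            have h := congrFun (congrFun e3 0) ⟨j.val - 2 * N, hj'⟩
            simp only [Matrix.add_apply, ← rowm_vecMul, rowm, wrow, Matrix.of_apply] at h
            exact h
      rw [hones, ones_vecMul_Abar]

end aux

theorem stmt6 (N : ℕ) (hN : 1 ≤ N) (P1 P2 P3 P4 : Matrix (Fin N) (Fin N) ℂ)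
    (hne : P1 ≠ P3)
    (hcond : (P3 - P1)ᴴ * (P3 - P1) = ((frobSq (P3 - P1) / (N : ℝ) : ℝ) : ℂ) • 1) :
    (Gmat P1 P2 P3 P4).rank = 2 * N ↔
      wrow N *
          (P1 * P2 +
            ((N : ℝ) / frobSq (P3 - P1) : ℝ) •
              ((1 - P1) * (P3 - P1)ᴴ * (P3 * P4 - P1 * P2))) ≠
        wrow N := by
  have hS0 : P3 - P1 ≠ 0 := sub_ne_zero.mpr (Ne.symm hne)
  have hcpos : 0 < frobSq (P3 - P1) := by
    obtain ⟨i, j, hij⟩ : ∃ i j, (P3 - P1) i j ≠ 0 := by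
      by_contra hco
      push_neg at hco
      exact hS0 (by ext i j; simpa using hco i j)
    have h1 : 0 < Complex.normSq ((P3 - P1) i j) := Complex.normSq_pos.mpr hij
    have h2 : Complex.normSq ((P3 - P1) i j) ≤ ∑ j', Complex.normSq ((P3 - P1) i j') :=
      Finset.single_le_sum (fun _ _ => Complex.normSq_nonneg _) (Finset.mem_univ j)
    have h3 : (∑ j', Complex.normSq ((P3 - P1) i j'))
        ≤ ∑ i', ∑ j', Complex.normSq ((P3 - P1) i' j') :=
      Finset.single_le_sum (fun _ _ => Finset.sum_nonneg fun _ _ => Complex.normSq_nonneg _)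
        (Finset.mem_univ i)
    unfold frobSq
    linarith
  set c := frobSq (P3 - P1) with hc
  have hcne : c ≠ 0 := ne_of_gt hcpos
  have hNne : (N : ℝ) ≠ 0 := by positivity
  set Sinv : Matrix (Fin N) (Fin N) ℂ := (((N : ℝ) / c : ℝ) : ℂ) • (P3 - P1)ᴴ with hSinv
  have hS2 : Sinv * (P3 - P1) = 1 := by
    rw [hSinv, Matrix.smul_mul, hcond, smul_smul]
    norm_cast
    rw [div_mul_div_comm]
    rw [show (N : ℝ) * c / (c * N) = 1 by field_simp]
    norm_num
  have hS1 : (P3 - P1) * Sinv = 1 := mul_eq_one_comm.mpr hS2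
  have hE : ((N : ℝ) / c : ℝ) • ((1 - P1) * (P3 - P1)ᴴ * (P3 * P4 - P1 * P2))
      = (1 - P1) * Sinv * (P3 * P4 - P1 * P2) := by
    rw [hSinv, Matrix.mul_smul, Matrix.smul_mul]
    ext i j
    simp [Matrix.smul_apply, Complex.real_smul]
  rw [hE, rank_full_iff, ne_eq, ← key hN P1 P2 P3 P4 Sinv hS1 hS2]
  constructor
  · intro h hex
    obtain ⟨x, hx0, hxG⟩ := hex
    exact hx0 (h x hxG)
  · intro h x hxG
    by_contra hx0
    exact h ⟨x, hx0, hxG⟩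

end
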